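/- arXiv:2309.11790 — 3 statements merged into one kernel-verified Lean document; each statement's English description precedes it below -/
import Mathlib

section
/- Let (E,⟨·,·⟩) be a real inner product space, V ∈ E with ‖V‖ < 1, λ := 1 − ‖V‖², and let F(y) = (√(λ‖y‖² + ⟨y,V⟩²) − ⟨y,V⟩)/λ be the associated Randers norm. Then for any W ∈ E, F(−W) < 1 if and only if ‖V + W‖ < 1. -/
open scoped RealInnerProductSpace

theorem randers_FnegW_lt_one_iff
    {E : Type*} [NormedAddCommGroup E] [InnerProductSpace ℝ E]
    (V : E) (hV : ‖V‖ < 1) (lam : ℝ) (hlam : lam = 1 - ‖V‖ ^ 2)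
    (F : E → ℝ)
    (hF : ∀ y : E, F y = (Real.sqrt (lam * ‖y‖ ^ 2 + ⟪y, V⟫ ^ 2) - ⟪y, V⟫) / lam) :
    ∀ W : E, F (-W) < 1 ↔ ‖V + W‖ < 1 := by
  intro W
  have hlp : 0 < lam := by rw [hlam]; nlinarith [norm_nonneg V]
  set c : ℝ := ⟪W, V⟫ with hc
  have hFW : F (-W) = (Real.sqrt (lam * ‖W‖ ^ 2 + c ^ 2) + c) / lam := by
    rw [hF, inner_neg_left, norm_neg, ← hc]; ring_nf
  have hs : (0:ℝ) ≤ Real.sqrt (lam * ‖W‖ ^ 2 + c ^ 2) := Real.sqrt_nonneg _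
  have hnorm : ‖V + W‖ ^ 2 = ‖V‖ ^ 2 + 2 * c + ‖W‖ ^ 2 := by
    rw [norm_add_sq_real, real_inner_comm]
  have hWnn : (0:ℝ) ≤ ‖W‖ ^ 2 := sq_nonneg _
  constructor
  · intro h
    rw [hFW, div_lt_one hlp] at h
    have h1 : Real.sqrt (lam * ‖W‖ ^ 2 + c ^ 2) < lam - c := by linarith
    have h2 : 0 < lam - c := lt_of_le_of_lt hs h1
    have h3 : lam * ‖W‖ ^ 2 + c ^ 2 < (lam - c) ^ 2 := (Real.sqrt_lt' h2).mp h1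
    have h4 : ‖V + W‖ ^ 2 < 1 := by nlinarith
    nlinarith [norm_nonneg (V + W)]
  · intro h
    have h4 : ‖V + W‖ ^ 2 < 1 := by nlinarith [norm_nonneg (V + W)]
    have h2 : 0 < lam - c := by nlinarith
    have h3 : lam * ‖W‖ ^ 2 + c ^ 2 < (lam - c) ^ 2 := by nlinarith
    have h1 : Real.sqrt (lam * ‖W‖ ^ 2 + c ^ 2) < lam - c := (Real.sqrt_lt' h2).mpr h3
    rw [hFW, div_lt_one hlp]
    linarith
end

section
/- Let (E, a) be a finite-dimensional real inner product space, b ∈ E* with ‖b‖_a < 1, ε := 1 − ‖b‖_a², h(y,z) := ε(a(y,z) − b(y)b(z)), V := −b♯/ε. Let F(y) := ‖y‖_a + b(y) be the Randers norm and W ∈ E. Then 1 − ‖V + W‖_h² = ε·(1 + F(W))·(1 − F(−W)). -/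
open scoped RealInnerProductSpace

/-- `σ = ε·η`: with navigation data `(h, V)` of the Randers norm `F = α + β`
(`b` represented by its Riesz representative `bv`), one has
`1 - ‖V + W‖_h² = ε (1 + F(W)) (1 - F(-W))`. -/
theorem sigma_eq_eps_eta
    {E : Type*} [NormedAddCommGroup E] [InnerProductSpace ℝ E] [FiniteDimensional ℝ E]
    (bv : E) (hb : ‖bv‖ < 1) (eps : ℝ) (heps : eps = 1 - ‖bv‖ ^ 2)
    (h : E → E → ℝ)
    (hh : ∀ y z : E, h y z = eps * (⟪y, z⟫ - ⟪bv, y⟫ * ⟪bv, z⟫))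
    (V : E) (hV : V = -(1 / eps) • bv)
    (F : E → ℝ) (hF : ∀ y : E, F y = ‖y‖ + ⟪bv, y⟫)
    (W : E) :
    1 - h (V + W) (V + W) = eps * (1 + F W) * (1 - F (-W)) := by
  have heps0 : eps ≠ 0 := by
    rw [heps]; nlinarith [norm_nonneg bv]
  rw [hh, hF, hF, hV]
  simp only [inner_neg_right, norm_neg, inner_add_right, inner_add_left, inner_smul_left,
    inner_smul_right, real_inner_self_eq_norm_sq, inner_neg_left, RCLike.ofReal_real_eq_id,
    id_eq, neg_smul, inner_neg_left, inner_neg_right, conj_trivial]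
  rw [real_inner_comm W bv]
  rw [heps] at heps0 ⊢
  field_simp
  ring
end

section
/- Let (E,a) be a finite-dimensional real inner product space, b ∈ E* with ‖b‖_a < 1, ε := 1 − ‖b‖_a², h := ε(a − b⊗b), V := −b♯/ε, and W ∈ E with F(−W) < 1 where F(y) = ‖y‖_a + b(y). Set η := (1 + F(W))(1 − F(−W)) and W̃(z) := a(W,z) − b(z)(1 + b(W)). Then the Randers data with navigation data (h, V+W) is given by ã(y,z) = (1/η)(a(y,z) − b(y)b(z)) + (1/η²)W̃(y)W̃(z) and b̃(z) = −W̃(z)/η. -/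
open scoped RealInnerProductSpace

/-- Expressions of `α̃` and `β̃` for the Randers metric with navigation data
`(h, V + W)`: with `σ := 1 - ‖V + W‖_h²`, the Zermelo formulas
`ã(y,z) = h(y,z)/σ + h(U,y)h(U,z)/σ²`, `b̃(z) = -h(U,z)/σ` become
`ã(y,z) = (1/η)(a(y,z) - b(y)b(z)) + (1/η²) W̃(y) W̃(z)`, `b̃(z) = -W̃(z)/η`. -/
theorem randers_beta_change_formulas
    {E : Type*} [NormedAddCommGroup E] [InnerProductSpace ℝ E] [FiniteDimensional ℝ E]
    (bv : E) (hb : ‖bv‖ < 1) (eps : ℝ) (heps : eps = 1 - ‖bv‖ ^ 2)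
    (h : E → E → ℝ)
    (hh : ∀ y z : E, h y z = eps * (⟪y, z⟫ - ⟪bv, y⟫ * ⟪bv, z⟫))
    (V : E) (hV : V = -(1 / eps) • bv)
    (F : E → ℝ) (hF : ∀ y : E, F y = ‖y‖ + ⟪bv, y⟫)
    (W : E) (hW : F (-W) < 1)
    (eta : ℝ) (heta : eta = (1 + F W) * (1 - F (-W)))
    (Wt : E → ℝ) (hWt : ∀ z : E, Wt z = ⟪W, z⟫ - ⟪bv, z⟫ * (1 + ⟪bv, W⟫))
    (sigma : ℝ) (hsigma : sigma = 1 - h (V + W) (V + W)) :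
    (∀ y z : E,
      h y z / sigma + h (V + W) y * h (V + W) z / sigma ^ 2 =
        (1 / eta) * (⟪y, z⟫ - ⟪bv, y⟫ * ⟪bv, z⟫) + (1 / eta ^ 2) * (Wt y * Wt z)) ∧
    (∀ z : E, -(h (V + W) z) / sigma = -(Wt z) / eta) := by
  have hbW : |⟪bv, W⟫| ≤ ‖bv‖ * ‖W‖ := abs_real_inner_le_norm _ _
  have hεpos : 0 < eps := by
    rw [heps]; nlinarith [norm_nonneg bv]
  have hε : eps ≠ 0 := ne_of_gt hεpos
  have hFW : 0 ≤ F W := by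
    rw [hF]; nlinarith [norm_nonneg W, norm_nonneg bv, abs_le.mp hbW]
  have hηpos : 0 < eta := by
    rw [heta]; nlinarith [hW]
  have hη : eta ≠ 0 := ne_of_gt hηpos
  have key : ∀ z : E, h (V + W) z = eps * Wt z := by
    intro z
    rw [hh, hWt, hV]
    simp only [inner_add_left, inner_add_right, inner_smul_left, inner_smul_right,
      inner_neg_left, inner_neg_right, neg_smul, real_inner_self_eq_norm_sq,
      RCLike.ofReal_real_eq_id, id_eq, conj_trivial]
    field_simp
    linear_combination (inner ℝ bv z : ℝ) * heps
  have hσ : sigma = eps * eta := by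
    rw [hsigma, key, hWt, heta, hF, hF]
    have h1 : ⟪W, V + W⟫ = -(1/eps) * ⟪bv, W⟫ + ‖W‖ ^ 2 := by
      rw [hV]
      simp only [inner_add_right, inner_smul_right, inner_neg_right, neg_smul,
        real_inner_self_eq_norm_sq]
      rw [real_inner_comm W bv]; ring
    have h2 : ⟪bv, V + W⟫ = -(1/eps) * ‖bv‖ ^ 2 + ⟪bv, W⟫ := by
      rw [hV]
      simp only [inner_add_right, inner_smul_right, inner_neg_right, neg_smul,
        real_inner_self_eq_norm_sq]
      ring
    rw [h1, h2, inner_neg_right, norm_neg]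
    have hWn : ‖W‖ * ‖W‖ = ‖W‖ ^ 2 := by ring
    field_simp
    linear_combination (-(1 + (inner ℝ bv W : ℝ))) * heps
  have hσε : sigma = eps * eta := hσ
  constructor
  · intro y z
    rw [hh, key, key, hσ]
    field_simp
  · intro z
    rw [key, hσ]
    field_simp
end
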